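/- Under the randomized voting caterpillar rule applied to the superman-kryptonite tournament on n players, player 1 wins with probability 1/2 − 1/(n(n−1)) and player n wins with probability 1/n. -/

import Mathlib

abbrev Tournament (n : ℕ) := Fin n → Fin n → Bool

def IsTournament {n : ℕ} (T : Tournament n) : Prop :=
  (∀ i, T i i = false) ∧ ∀ i j : Fin n, i ≠ j → T i j = !T j i

def CondorcetWinner {n : ℕ} (T : Tournament n) (i : Fin n) : Prop :=
  ∀ j, j ≠ i → T i j = true

def PairAdjacent {n : ℕ} (i j : Fin n) (T T' : Tournament n) : Prop :=
  ∀ a b : Fin n, ¬((a = i ∧ b = j) ∨ (a = j ∧ b = i)) → T a b = T' a b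

def SAdjacent {n : ℕ} (S : Finset (Fin n)) (T T' : Tournament n) : Prop :=
  ∀ a b : Fin n, (a ∉ S ∨ b ∉ S) → T a b = T' a b

def IsRule {n : ℕ} (r : Tournament n → Fin n → ℝ) : Prop :=
  ∀ T, IsTournament T → (∀ i, 0 ≤ r T i) ∧ (∑ i, r T i) = 1

def CondorcetConsistent {n : ℕ} (r : Tournament n → Fin n → ℝ) : Prop :=
  ∀ T, IsTournament T → ∀ i, CondorcetWinner T i → r T i = 1

def SNM2 {n : ℕ} (r : Tournament n → Fin n → ℝ) (α : ℝ) : Prop :=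
  ∀ T T' : Tournament n, IsTournament T → IsTournament T' →
    ∀ i j : Fin n, i ≠ j → PairAdjacent i j T T' →
      r T' i + r T' j - r T i - r T j ≤ α

def SNMk {n : ℕ} (k : ℕ) (r : Tournament n → Fin n → ℝ) (α : ℝ) : Prop :=
  ∀ S : Finset (Fin n), S.card ≤ k → ∀ T T' : Tournament n,
    IsTournament T → IsTournament T' → SAdjacent S T T' →
      (∑ i ∈ S, r T' i) - (∑ i ∈ S, r T i) ≤ α

def flipTo {n : ℕ} (i j : Fin n) (T : Tournament n) : Tournament n :=
  fun a b => if a = i ∧ b = j then true else if a = j ∧ b = i then false else T a b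

def winCount {n : ℕ} (T : Tournament n) (i : Fin n) : ℕ :=
  (Finset.univ.filter fun j => T i j = true).card

def cyclicT (m w : ℕ) : Tournament m :=
  fun i j => decide (1 ≤ (j.val + m - i.val) % m ∧ (j.val + m - i.val) % m ≤ w)

def skT (n : ℕ) : Tournament n :=
  fun i j =>
    if i.val = n - 1 ∧ j.val = 0 then true
    else if i.val = 0 ∧ j.val = n - 1 then false
    else decide (i.val < j.val)

def catWinner {n : ℕ} (hn : 0 < n) (T : Tournament n) (π : Equiv.Perm (Fin n)) : Fin n :=
  (((List.finRange n).map π).drop 1).foldl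
    (fun w x => if T w x = true then w else x) (π ⟨0, hn⟩)

noncomputable def catRule (n : ℕ) (hn : 0 < n) : Tournament n → Fin n → ℝ :=
  fun T i =>
    ((Finset.univ.filter fun π : Equiv.Perm (Fin n) => catWinner hn T π = i).card : ℝ) /
      (Nat.factorial n)


set_option linter.unusedSectionVars false
set_option maxHeartbeats 1000000

def fn (n : ℕ) : Fin n → Fin n → Fin n := fun w x => if skT n w x = true then w else x

section
variable {n : ℕ} (hn : 2 < n)
include hn
lemma f_mem (w x : Fin n) : fn n w x = w ∨ fn n w x = x := by
  unfold fn; split_ifs <;> simp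
lemma f_ne (w x a : Fin n) (hw : w ≠ a) (hx : x ≠ a) : fn n w x ≠ a := by
  rcases f_mem hn w x with h | h <;> rw [h] <;> assumption
lemma f_z (x : Fin n) (hx : x.val ≠ n-1) : fn n ⟨0, by omega⟩ x = ⟨0, by omega⟩ := by
  unfold fn skT
  split_ifs with h1 h2 h3 <;> simp_all [Fin.ext_iff, Fin.val_mk] <;> omega
lemma f_wz (w : Fin n) (hw : w.val ≠ n-1) : fn n w ⟨0, by omega⟩ = ⟨0, by omega⟩ := by
  unfold fn skT
  split_ifs with h1 h2 h3 <;> simp_all [Fin.ext_iff, Fin.val_mk] <;> omega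
lemma f_zm : fn n ⟨0, by omega⟩ ⟨n-1, by omega⟩ = ⟨n-1, by omega⟩ := by
  have hs : skT n ⟨0, by omega⟩ ⟨n-1, by omega⟩ = false := by
    unfold skT
    rw [if_neg (by rintro ⟨h, -⟩; rw [Fin.val_mk] at h; omega), if_pos ⟨rfl, rfl⟩]
  unfold fn
  rw [hs]; simp
lemma f_m (x : Fin n) (hx : x.val ≠ 0) : fn n ⟨n-1, by omega⟩ x = x := by
  unfold fn skT
  split_ifs with h1 h2 h3 <;> simp_all [Fin.ext_iff, Fin.val_mk] <;> omega
lemma f_mz : fn n ⟨n-1, by omega⟩ ⟨0, by omega⟩ = ⟨n-1, by omega⟩ := by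
  have hs : skT n ⟨n-1, by omega⟩ ⟨0, by omega⟩ = true := by
    unfold skT
    rw [if_pos ⟨rfl, rfl⟩]
  unfold fn
  rw [hs]; simp
lemma f_wm (w : Fin n) (h0 : w.val ≠ 0) (h1 : w.val ≠ n-1) :
    fn n w ⟨n-1, by omega⟩ = w := by
  unfold fn skT
  split_ifs with hc1 hc2 hc3 <;> simp_all [Fin.ext_iff, Fin.val_mk] <;> omega

lemma W_ne (l : List (Fin n)) (a : Fin n) (h : ∀ x ∈ l, x ≠ a) :
    ∀ w : Fin n, w ≠ a → l.foldl (fn n) w ≠ a := by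
  induction l with
  | nil => intro w hw; simpa using hw
  | cons x t ih =>
    intro w hw
    rw [List.foldl_cons]
    exact ih (fun y hy => h y (List.mem_cons_of_mem _ hy))
      _ (f_ne hn _ _ _ hw (h x (List.mem_cons_self)))

lemma W_mem (l : List (Fin n)) : ∀ w : Fin n, l.foldl (fn n) w = w ∨ l.foldl (fn n) w ∈ l := by
  induction l with
  | nil => intro w; left; rfl
  | cons x t ih =>
    intro w
    rw [List.foldl_cons]
    rcases ih (fn n w x) with h | h
    · rw [h]
      rcases f_mem hn w x with h' | h'
      · left; exact h'
      · right; rw [h']; exact List.mem_cons_self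
    · right; exact List.mem_cons_of_mem _ h

lemma W_z (l : List (Fin n)) (h : ∀ x ∈ l, x.val ≠ n-1) :
    l.foldl (fn n) ⟨0, by omega⟩ = ⟨0, by omega⟩ := by
  induction l with
  | nil => rfl
  | cons x t ih =>
    rw [List.foldl_cons, f_z hn x (h x (List.mem_cons_self))]
    exact ih (fun y hy => h y (List.mem_cons_of_mem _ hy))

lemma W_to_z (l : List (Fin n)) (h : ∀ x ∈ l, x.val ≠ n-1) (hz : (⟨0, by omega⟩ : Fin n) ∈ l) :
    ∀ w : Fin n, w.val ≠ n-1 → l.foldl (fn n) w = ⟨0, by omega⟩ := by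
  induction l with
  | nil => simp at hz
  | cons x t ih =>
    intro w hw
    rw [List.foldl_cons]
    by_cases hx : x = ⟨0, by omega⟩
    · subst hx
      rw [f_wz hn w hw]
      exact W_z hn t (fun y hy => h y (List.mem_cons_of_mem _ hy))
    · have hz' : (⟨0, by omega⟩ : Fin n) ∈ t := by
        rcases List.mem_cons.1 hz with h' | h'
        · exact absurd h'.symm hx
        · exact h'
      have : (fn n w x).val ≠ n - 1 := by
        rcases f_mem hn w x with h' | h' <;> rw [h']
        · exact hw
        · exact h x (List.mem_cons_self)
      exact ih (fun y hy => h y (List.mem_cons_of_mem _ hy)) hz' _ this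

lemma winner_char (π : Equiv.Perm (Fin n)) :
    (catWinner (show 0 < n by omega) (skT n) π = ⟨0, by omega⟩ ↔
      ((π.symm ⟨n-1, by omega⟩).val < (π.symm ⟨0, by omega⟩).val ∧
        ¬(π ⟨0, by omega⟩ = ⟨n-1, by omega⟩ ∧ π ⟨1, by omega⟩ = ⟨0, by omega⟩))) ∧
    (catWinner (show 0 < n by omega) (skT n) π = ⟨n-1, by omega⟩ ↔
      π ⟨n-1, by omega⟩ = ⟨n-1, by omega⟩) := by
  have h0 : 0 < n := by omega
  set zz : Fin n := ⟨0, by omega⟩ with hzz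
  set mm : Fin n := ⟨n-1, by omega⟩ with hmm
  have hzm : zz ≠ mm := by simp [hzz, hmm, Fin.ext_iff]; omega
  set l : List (Fin n) := (List.finRange n).map π with hldef
  have hlen : l.length = n := by simp [hldef]
  have hnd : l.Nodup := (List.nodup_finRange n).map π.injective
  have hmem : ∀ x : Fin n, x ∈ l := by
    intro x; simp [hldef]
    exact ⟨π.symm x, π.apply_symm_apply x⟩
  have hget : ∀ (i : ℕ) (h : i < n), l[i]'(by omega) = π ⟨i, h⟩ := by
    intro i h
    show ((List.finRange n).map ⇑π)[i]'(by simp; omega) = π ⟨i, h⟩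
    rw [List.getElem_map, List.getElem_finRange]
    rfl
  have hsymm : ∀ (i : ℕ) (h : i < n) (a : Fin n), l[i]'(by omega) = a → π.symm a = ⟨i, h⟩ := by
    intro i h a ha
    rw [hget i h] at ha
    exact (Equiv.symm_apply_eq π).2 ha.symm
  have hWdef : catWinner h0 (skT n) π = l.tail.foldl (fn n) (π ⟨0, h0⟩) := by
    unfold catWinner
    rw [List.drop_one]
    rfl
  obtain ⟨u, v, hl⟩ := List.append_of_mem (hmem mm)
  have hndl : (u ++ mm :: v).Nodup := hl ▸ hnd
  have hnu := List.nodup_append.1 hndl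
  have hmu : mm ∉ u := fun h => hnu.2.2 _ h _ List.mem_cons_self rfl
  have hmv : mm ∉ v := by
    have := hnu.2.1
    rw [List.nodup_cons] at this
    exact this.1
  have hn_eq : u.length + 1 + v.length = n := by
    have := congrArg List.length hl
    rw [hlen] at this
    simp [List.length_append] at this
    omega
  have hul : u.length < n := by omega
  have humm : π.symm mm = ⟨u.length, hul⟩ := by
    apply hsymm
    rw [List.getElem_of_eq hl (by omega), List.getElem_append_right (le_refl u.length)]
    simp
  have hvne_mm : ∀ x ∈ v, x.val ≠ n-1 := by
    intro x hx hx'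
    exact hmv (by rwa [show x = mm from Fin.ext (by rw [hmm, Fin.val_mk]; exact hx')] at hx)
  have hune_mm : ∀ x ∈ u, x ≠ mm := fun x hx h' => hmu (h' ▸ hx)
  have hnem : ∀ x : Fin n, x ≠ mm → x.val ≠ n-1 := fun x hx h' => hx (Fin.ext h')
  have hnotmem_ne : ∀ (L : List (Fin n)) (a : Fin n), a ∉ L → ∀ x ∈ L, x ≠ a :=
    fun L a ha x hx hc => ha (hc ▸ hx)
  have hnez : ∀ x : Fin n, x ≠ zz → x.val ≠ 0 := fun x hx h' => hx (Fin.ext h')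
  have hcat : ∀ a : Fin n, (catWinner (show 0 < n by omega) (skT n) π = a) ↔
      ((l.drop 1).foldl (fn n) (π ⟨0, h0⟩) = a) := fun a => Iff.rfl
  simp only [hcat]
  rcases List.mem_append.1 (by rw [← hl]; exact hmem zz) with hzu | hzv0
  · -- zz ∈ u
    obtain ⟨u₁, u₂, hu⟩ := List.append_of_mem hzu
    have hl2 : l = u₁ ++ (zz :: (u₂ ++ mm :: v)) := by
      rw [hl, hu, List.append_assoc, List.cons_append]
    have hu₁l : u₁.length < n := by
      have := congrArg List.length hu
      simp [List.length_append] at this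
      omega
    have hulen : u.length = u₁.length + 1 + u₂.length := by
      have := congrArg List.length hu
      simp [List.length_append] at this
      omega
    have hzidx : π.symm zz = ⟨u₁.length, hu₁l⟩ := by
      apply hsymm
      rw [List.getElem_of_eq hl2 (by omega), List.getElem_append_right (le_refl _)]
      simp
    have hnlt : ¬ (π.symm mm).val < (π.symm zz).val := by
      rw [humm, hzidx]
      simp only [Fin.val_mk]
      omega
    have hndu : (u₁ ++ zz :: u₂).Nodup := hu ▸ hnu.1
    have hnu2 := List.nodup_append.1 hndu
    have hz1 : zz ∉ u₁ := fun h => hnu2.2.2 _ h _ List.mem_cons_self rfl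
    have hz2 : zz ∉ u₂ := by
      have := hnu2.2.1
      rw [List.nodup_cons] at this
      exact this.1
    have hzvn : zz ∉ v := fun h => hnu.2.2 _ hzu _ (List.mem_cons_of_mem _ h) rfl
    have hm1 : mm ∉ u₁ := fun h => hmu (by rw [hu]; exact List.mem_append_left _ h)
    have hm2 : mm ∉ u₂ := fun h =>
      hmu (by rw [hu]; exact List.mem_append_right _ (List.mem_cons_of_mem _ h))
    have hu₂ne : ∀ x ∈ u₂, x.val ≠ n-1 := fun x hx hx' => hm2 (by
      rwa [show x = mm from Fin.ext hx'] at hx)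
    have hWv : (l.drop 1).foldl (fn n) (π ⟨0, h0⟩) = v.foldl (fn n) mm := by
      cases u₁ with
      | nil =>
        have hp0 : π ⟨0, h0⟩ = zz := by
          rw [← hget 0 h0, List.getElem_of_eq hl2 (by omega)]
          simp
        have htl : l.drop 1 = u₂ ++ mm :: v := by rw [hl2]; rfl
        rw [hp0, htl, List.foldl_append, W_z hn u₂ hu₂ne, List.foldl_cons, f_zm hn]
      | cons a u₁' =>
        have hp0 : π ⟨0, h0⟩ = a := by
          rw [← hget 0 h0, List.getElem_of_eq hl2 (by omega)]
          simp
        have htl : l.drop 1 = u₁' ++ (zz :: (u₂ ++ mm :: v)) := by rw [hl2]; rfl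
        rw [hp0, htl, List.foldl_append]
        have hw1mem := W_mem hn u₁' a
        set w1 := u₁'.foldl (fn n) a with hw1def
        have hw1m : w1 ≠ mm := by
          rcases hw1mem with h' | h'
          · rw [h']; exact fun hc => hm1 (by rw [← hc]; exact List.mem_cons_self)
          · exact fun hc => hm1 (by rw [← hc]; exact List.mem_cons_of_mem _ h')
        rw [List.foldl_cons, f_wz hn w1 (hnem _ hw1m), List.foldl_append,
          W_z hn u₂ hu₂ne, List.foldl_cons, f_zm hn]
    rw [hWv]
    cases v with
    | nil =>
      have hlast : π ⟨n-1, by omega⟩ = mm := by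
        have h2 : π.symm mm = ⟨n-1, by omega⟩ := by
          rw [humm]
          have hu' : u.length = n - 1 := by simp at hn_eq; omega
          exact Fin.ext (by simp only [Fin.val_mk]; exact hu')
        rw [← h2, π.apply_symm_apply]
      constructor
      · exact iff_of_false (fun h => hzm h.symm) (fun h => hnlt h.1)
      · exact iff_of_true List.foldl_nil hlast
    | cons x v' =>
      have hxz : x ≠ zz := fun h => hzvn (by rw [← h]; exact List.mem_cons_self)
      have hxm : x ≠ mm := fun h => hmv (by rw [← h]; exact List.mem_cons_self)
      have hzv' : zz ∉ v' := fun h => hzvn (List.mem_cons_of_mem _ h)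
      have hmv' : mm ∉ v' := fun h => hmv (List.mem_cons_of_mem _ h)
      rw [List.foldl_cons, f_m hn x (hnez _ hxz)]
      have hne1 : v'.foldl (fn n) x ≠ zz :=
        W_ne hn v' zz (hnotmem_ne v' zz hzv') x hxz
      have hne2 : v'.foldl (fn n) x ≠ mm :=
        W_ne hn v' mm (hnotmem_ne v' mm hmv') x hxm
      have hlastne : π ⟨n-1, by omega⟩ ≠ mm := by
        intro hcon
        have h2 : π ⟨u.length, hul⟩ = mm := by rw [← humm, π.apply_symm_apply]
        have h4 := congrArg Fin.val (π.injective (hcon.trans h2.symm))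
        simp only [Fin.val_mk] at h4
        simp only [List.length_cons] at hn_eq
        omega
      constructor
      · exact iff_of_false hne1 (fun h => hnlt h.1)
      · exact iff_of_false hne2 hlastne
  · -- zz ∈ mm :: v
    have hzv : zz ∈ v := (List.mem_cons.1 hzv0).resolve_left hzm
    have hznu : zz ∉ u := fun h => hnu.2.2 _ h _ hzv0 rfl
    obtain ⟨j, hj, hvj⟩ := List.mem_iff_getElem.1 hzv
    have hjlt : u.length + 1 + j < n := by omega
    have hzidx : π.symm zz = ⟨u.length + 1 + j, hjlt⟩ := by
      apply hsymm
      rw [List.getElem_of_eq hl (by omega), List.getElem_append_right (by omega)]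
      simp only [show u.length + 1 + j - u.length = j + 1 from by omega,
        List.getElem_cons_succ]
      exact hvj
    have hlt : (π.symm mm).val < (π.symm zz).val := by
      rw [humm, hzidx]
      simp only [Fin.val_mk]
      omega
    have hvm' : ∀ x ∈ v, x ≠ mm := fun x hx h' => hmv (h' ▸ hx)
    cases u with
    | nil =>
      have hp0 : π ⟨0, h0⟩ = mm := by
        rw [← hget 0 h0, List.getElem_of_eq hl (by omega)]
        simp
      have htl : l.drop 1 = v := by rw [hl]; rfl
      rw [hp0, htl]
      have hlastne : π ⟨n-1, by omega⟩ ≠ mm := by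
        intro hcon
        have h2 : π (π.symm mm) = mm := π.apply_symm_apply mm
        rw [humm] at h2
        have h4 := congrArg Fin.val (π.injective (hcon.trans h2.symm))
        simp only [Fin.val_mk] at h4
        simp only [List.length_nil] at hn_eq
        omega
      cases v with
      | nil => simp at hzv
      | cons x v' =>
        have hvnd : (mm :: x :: v').Nodup := hnu.2.1
        by_cases hx : x = zz
        · subst hx
          have hp1 : π ⟨1, by omega⟩ = zz := by
            rw [← hget 1 (by omega), List.getElem_of_eq hl (by omega)]
            simp
          rw [List.foldl_cons, f_mz hn]
          cases v' with
          | nil =>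
            exfalso
            simp at hn_eq
            omega
          | cons y v'' =>
            have hnd2 : (zz :: y :: v'').Nodup := by
              rw [List.nodup_cons] at hvnd
              exact hvnd.2
            have hy0 : y ≠ zz := by
              rw [List.nodup_cons] at hnd2
              exact fun h => hnd2.1 (by rw [← h]; exact List.mem_cons_self)
            have hym : y ≠ mm := hvm' y (List.mem_cons_of_mem _ (List.mem_cons_self))
            have hzv'' : zz ∉ v'' := by
              rw [List.nodup_cons] at hnd2
              exact fun h => hnd2.1 (List.mem_cons_of_mem _ h)
            have hmv'' : mm ∉ v'' := fun h =>
              hmv (List.mem_cons_of_mem _ (List.mem_cons_of_mem _ h))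
            rw [List.foldl_cons, f_m hn y (hnez _ hy0)]
            have hne1 : v''.foldl (fn n) y ≠ zz :=
              W_ne hn v'' zz (hnotmem_ne v'' zz hzv'') y hy0
            have hne2 : v''.foldl (fn n) y ≠ mm :=
              W_ne hn v'' mm (hnotmem_ne v'' mm hmv'') y hym
            constructor
            · exact iff_of_false hne1 (fun h => h.2 ⟨rfl, hp1⟩)
            · exact iff_of_false hne2 hlastne
        · have hzv'' : zz ∈ v' := (List.mem_cons.1 hzv).resolve_left (fun h => hx h.symm)
          rw [List.foldl_cons, f_m hn x (hnez _ hx)]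
          have hWz : v'.foldl (fn n) x = zz :=
            W_to_z hn v' (fun y hy => hvne_mm y (List.mem_cons_of_mem _ hy)) hzv'' x
              (hnem _ (hvm' x (List.mem_cons_self)))
          rw [hWz]
          have hp1 : π ⟨1, by omega⟩ = x := by
            rw [← hget 1 (by omega), List.getElem_of_eq hl (by omega)]
            simp
          constructor
          · exact iff_of_true rfl ⟨hlt, fun hcon => hx (by rw [← hp1, hcon.2])⟩
          · exact iff_of_false hzm hlastne
    | cons a u' =>
      have hp0 : π ⟨0, h0⟩ = a := by
        rw [← hget 0 h0, List.getElem_of_eq hl (by omega)]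
        simp
      have htl : l.drop 1 = u' ++ mm :: v := by rw [hl]; rfl
      rw [hp0, htl, List.foldl_append]
      have hw1mem := W_mem hn u' a
      set w1 := u'.foldl (fn n) a with hw1def
      have hw1m : w1 ≠ mm := by
        rcases hw1mem with h' | h'
        · rw [h']; exact fun hc => hmu (by rw [← hc]; exact List.mem_cons_self)
        · exact fun hc => hmu (by rw [← hc]; exact List.mem_cons_of_mem _ h')
      have hw1z : w1 ≠ zz := by
        rcases hw1mem with h' | h'
        · rw [h']; exact fun hc => hznu (by rw [← hc]; exact List.mem_cons_self)
        · exact fun hc => hznu (by rw [← hc]; exact List.mem_cons_of_mem _ h')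
      rw [List.foldl_cons, f_wm hn w1 (hnez _ hw1z) (hnem _ hw1m)]
      have hWz : v.foldl (fn n) w1 = zz := W_to_z hn v hvne_mm hzv w1 (hnem _ hw1m)
      rw [hWz]
      have hane : a ≠ mm := fun h => hmu (by rw [← h]; exact List.mem_cons_self)
      have hlastne : π ⟨n-1, by omega⟩ ≠ mm := by
        intro hcon
        have h2 : π (π.symm mm) = mm := π.apply_symm_apply mm
        rw [humm] at h2
        have h4 := congrArg Fin.val (π.injective (hcon.trans h2.symm))
        simp only [Fin.val_mk] at h4
        have hvpos : 0 < v.length := List.length_pos_iff.2 (by rintro rfl; simp at hzv)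
        simp only [List.length_cons] at hn_eq
        omega
      constructor
      · exact iff_of_true rfl ⟨hlt, fun hcon => hane hcon.1⟩
      · exact iff_of_false hzm hlastne


end

open Finset in
lemma fiber_count {n : ℕ} (s : Finset (Equiv.Perm (Fin n))) (x : Fin n) (t : Finset (Fin n))
    (hmap : ∀ π ∈ s, π x ∈ t)
    (hstab : ∀ y z : Fin n, y ∈ t → z ∈ t → ∀ π ∈ s, Equiv.swap y z * π ∈ s) :
    ∀ y ∈ t, (s.filter (fun π => π x = y)).card * t.card = s.card := by
  intro y hy
  have hsum : s.card = ∑ b ∈ t, (s.filter fun π => π x = b).card :=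
    Finset.card_eq_sum_card_fiberwise hmap
  have heq : ∀ b ∈ t, (s.filter fun π => π x = b).card = (s.filter fun π => π x = y).card := by
    intro b hb
    apply Finset.card_bij' (fun π _ => Equiv.swap b y * π) (fun π _ => Equiv.swap b y * π)
    · intro π hπ
      rw [mem_filter] at hπ ⊢
      refine ⟨hstab b y hb hy π hπ.1, ?_⟩
      simp [Equiv.Perm.mul_apply, hπ.2, Equiv.swap_apply_left]
    · intro π hπ
      rw [mem_filter] at hπ ⊢
      refine ⟨hstab b y hb hy π hπ.1, ?_⟩
      simp [Equiv.Perm.mul_apply, hπ.2, Equiv.swap_apply_right]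
    · intro π hπ
      rw [← mul_assoc, Equiv.swap_mul_self, one_mul]
    · intro π hπ
      rw [← mul_assoc, Equiv.swap_mul_self, one_mul]
  rw [hsum, Finset.sum_congr rfl heq, Finset.sum_const, smul_eq_mul, mul_comm]

open Finset in
lemma half_count {n : ℕ} (hn : 2 < n) :
    ((Finset.univ.filter fun π : Equiv.Perm (Fin n) =>
      (π.symm ⟨n-1, by omega⟩ : Fin n).val < (π.symm ⟨0, by omega⟩ : Fin n).val).card) * 2
      = n.factorial := by
  set mm : Fin n := ⟨n-1, by omega⟩ with hmm
  set zz : Fin n := ⟨0, by omega⟩ with hzz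
  have hzm : zz ≠ mm := by
    simp only [hzz, hmm, Ne, Fin.mk.injEq]
    omega
  have hval : ∀ π : Equiv.Perm (Fin n), (π.symm mm).val ≠ (π.symm zz).val := by
    intro π h
    exact hzm (π.symm.injective (Fin.ext h)).symm
  have hsymm_mul : ∀ (π : Equiv.Perm (Fin n)) (a : Fin n),
      ((Equiv.swap zz mm * π).symm) a = π.symm (Equiv.swap zz mm a) := fun π a => rfl
  have hcardeq : ((Finset.univ.filter fun π : Equiv.Perm (Fin n) =>
        (π.symm mm).val < (π.symm zz).val).card)
      = ((Finset.univ.filter fun π : Equiv.Perm (Fin n) =>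
        ¬ ((π.symm mm).val < (π.symm zz).val)).card) := by
    apply Finset.card_bij' (fun π _ => Equiv.swap zz mm * π) (fun π _ => Equiv.swap zz mm * π)
    · intro π hπ
      rw [mem_filter] at hπ ⊢
      refine ⟨mem_univ _, ?_⟩
      rw [hsymm_mul, hsymm_mul, Equiv.swap_apply_left, Equiv.swap_apply_right]
      omega
    · intro π hπ
      rw [mem_filter] at hπ ⊢
      refine ⟨mem_univ _, ?_⟩
      rw [hsymm_mul, hsymm_mul, Equiv.swap_apply_left, Equiv.swap_apply_right]
      have := hval π
      omega
    · intro π hπ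
      rw [← mul_assoc, Equiv.swap_mul_self, one_mul]
    · intro π hπ
      rw [← mul_assoc, Equiv.swap_mul_self, one_mul]
  have hsum := Finset.card_filter_add_card_filter_not
    (s := (Finset.univ : Finset (Equiv.Perm (Fin n))))
    (p := fun π : Equiv.Perm (Fin n) => (π.symm mm).val < (π.symm zz).val)
  rw [card_univ, Fintype.card_perm, Fintype.card_fin] at hsum
  omega

lemma count_last {n : ℕ} (hn : 2 < n) :
    ((Finset.univ.filter fun π : Equiv.Perm (Fin n) =>
      π ⟨n-1, by omega⟩ = ⟨n-1, by omega⟩).card) * n = n.factorial := by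
  have h := fiber_count (n := n) Finset.univ ⟨n-1, by omega⟩ Finset.univ
    (fun π _ => Finset.mem_univ _) (fun _ _ _ _ _ _ => Finset.mem_univ _)
    ⟨n-1, by omega⟩ (Finset.mem_univ _)
  rwa [Finset.card_univ, Finset.card_univ, Fintype.card_fin, Fintype.card_perm,
    Fintype.card_fin] at h

lemma count_first {n : ℕ} (hn : 2 < n) :
    ((Finset.univ.filter fun π : Equiv.Perm (Fin n) =>
      π ⟨0, by omega⟩ = ⟨n-1, by omega⟩).card) * n = n.factorial := by
  have h := fiber_count (n := n) Finset.univ ⟨0, by omega⟩ Finset.univ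
    (fun π _ => Finset.mem_univ _) (fun _ _ _ _ _ _ => Finset.mem_univ _)
    ⟨n-1, by omega⟩ (Finset.mem_univ _)
  rwa [Finset.card_univ, Finset.card_univ, Fintype.card_fin, Fintype.card_perm,
    Fintype.card_fin] at h

open Finset in
lemma count_exc {n : ℕ} (hn : 2 < n) :
    ((Finset.univ.filter fun π : Equiv.Perm (Fin n) =>
      π ⟨0, by omega⟩ = ⟨n-1, by omega⟩ ∧ π ⟨1, by omega⟩ = ⟨0, by omega⟩).card) * (n-1)
      = (Finset.univ.filter fun π : Equiv.Perm (Fin n) =>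
          π ⟨0, by omega⟩ = ⟨n-1, by omega⟩).card := by
  set mm : Fin n := ⟨n-1, by omega⟩ with hmm
  set zz : Fin n := ⟨0, by omega⟩ with hzz
  have hzm : zz ≠ mm := by
    simp only [hzz, hmm, Ne, Fin.mk.injEq]
    omega
  set s : Finset (Equiv.Perm (Fin n)) :=
    Finset.univ.filter fun π => π ⟨0, by omega⟩ = mm with hs
  have hmap : ∀ π ∈ s, π ⟨1, by omega⟩ ∈ Finset.univ.erase mm := by
    intro π hπ
    rw [hs, mem_filter] at hπ
    rw [mem_erase]
    refine ⟨?_, mem_univ _⟩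
    intro hc
    have := π.injective (hc.trans hπ.2.symm)
    rw [Fin.mk.injEq] at this
    omega
  have hstab : ∀ y z : Fin n, y ∈ Finset.univ.erase mm → z ∈ Finset.univ.erase mm →
      ∀ π ∈ s, Equiv.swap y z * π ∈ s := by
    intro y z hy hz π hπ
    rw [mem_erase] at hy hz
    rw [hs, mem_filter] at hπ ⊢
    refine ⟨mem_univ _, ?_⟩
    rw [Equiv.Perm.mul_apply, hπ.2, Equiv.swap_apply_of_ne_of_ne
      (fun h => hy.1 h.symm) (fun h => hz.1 h.symm)]
  have h := fiber_count s ⟨1, by omega⟩ (Finset.univ.erase mm) hmap hstab zz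
    (by rw [mem_erase]; exact ⟨hzm, mem_univ _⟩)
  rw [card_erase_of_mem (mem_univ _), card_univ, Fintype.card_fin] at h
  rw [hs, Finset.filter_filter] at h
  exact h

/-- Under the randomized voting caterpillar rule on the superman-kryptonite tournament,
player 1 wins with probability 1/2 - 1/(n(n-1)) and player n with probability 1/n. -/
theorem stmt_10 (n : ℕ) (hn : 3 ≤ n) :
    catRule n (by omega) (skT n) ⟨0, by omega⟩ = 1/2 - 1/((n:ℝ) * ((n:ℝ) - 1)) ∧
    catRule n (by omega) (skT n) ⟨n - 1, by omega⟩ = 1/(n:ℝ) := by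
  classical
  have hnR : (3:ℝ) ≤ (n:ℝ) := by exact_mod_cast hn
  have hF : (n.factorial : ℝ) ≠ 0 := Nat.cast_ne_zero.2 (Nat.factorial_ne_zero n)
  constructor
  · unfold catRule
    rw [Finset.filter_congr (fun π _ => (winner_char hn π).1)]
    set A : Finset (Equiv.Perm (Fin n)) :=
      Finset.univ.filter fun π : Equiv.Perm (Fin n) =>
        (π.symm ⟨n-1, by omega⟩ : Fin n).val < (π.symm ⟨0, by omega⟩ : Fin n).val with hA
    set B : Finset (Equiv.Perm (Fin n)) :=
      Finset.univ.filter fun π : Equiv.Perm (Fin n) =>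
        π ⟨0, by omega⟩ = ⟨n-1, by omega⟩ ∧ π ⟨1, by omega⟩ = ⟨0, by omega⟩ with hB
    have hsplit : (Finset.univ.filter fun π : Equiv.Perm (Fin n) =>
        ((π.symm ⟨n-1, by omega⟩ : Fin n).val < (π.symm ⟨0, by omega⟩ : Fin n).val ∧
          ¬(π ⟨0, by omega⟩ = ⟨n-1, by omega⟩ ∧ π ⟨1, by omega⟩ = ⟨0, by omega⟩))) = A \ B := by
      ext π
      rw [hA, hB]
      simp only [Finset.mem_sdiff, Finset.mem_filter, Finset.mem_univ, true_and]
    have hBA : B ⊆ A := by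
      intro π hπ
      rw [hB, Finset.mem_filter] at hπ
      rw [hA, Finset.mem_filter]
      refine ⟨Finset.mem_univ _, ?_⟩
      have h1 : π.symm ⟨n-1, by omega⟩ = ⟨0, by omega⟩ := (Equiv.symm_apply_eq π).2 hπ.2.1.symm
      have h2 : π.symm ⟨0, by omega⟩ = ⟨1, by omega⟩ := (Equiv.symm_apply_eq π).2 hπ.2.2.symm
      rw [h1, h2]
      simp
    rw [hsplit, Finset.card_sdiff_of_subset hBA]
    have hsub := Finset.card_le_card hBA
    rw [Nat.cast_sub hsub]
    have hAval : (A.card : ℝ) = n.factorial / 2 := by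
      rw [eq_div_iff (two_ne_zero)]
      exact_mod_cast half_count hn
    have hn1 : ((n:ℝ) - 1) = ((n-1 : ℕ) : ℝ) := by
      rw [Nat.cast_sub (by omega)]
      simp
    have hBNat : B.card * (n-1) * n = n.factorial := by
      rw [hB, count_exc hn]
      exact count_first hn
    have hBval : (B.card : ℝ) = n.factorial / ((n:ℝ) * ((n:ℝ) - 1)) := by
      rw [eq_div_iff (by nlinarith : ((n:ℝ) * ((n:ℝ) - 1)) ≠ 0)]
      calc (B.card : ℝ) * ((n:ℝ) * ((n:ℝ) - 1))
          = ((B.card : ℝ) * (((n-1:ℕ)):ℝ)) * (n:ℝ) := by rw [← hn1]; ring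
        _ = ((B.card * (n-1) * n : ℕ) : ℝ) := by push_cast; ring
        _ = n.factorial := by exact_mod_cast congrArg (Nat.cast (R := ℝ)) hBNat
    rw [hAval, hBval]
    have hne : ((n:ℝ) * ((n:ℝ) - 1)) ≠ 0 := by nlinarith
    field_simp
  · unfold catRule
    rw [Finset.filter_congr (fun π _ => (winner_char hn π).2)]
    have h := count_last hn
    have hval : ((Finset.univ.filter fun π : Equiv.Perm (Fin n) =>
        π ⟨n-1, by omega⟩ = ⟨n-1, by omega⟩).card : ℝ) = n.factorial / (n:ℝ) := by
      rw [eq_div_iff (by nlinarith : ((n:ℝ)) ≠ 0)]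
      exact_mod_cast h
    rw [hval, div_div]
    rw [div_eq_div_iff (by positivity) (by nlinarith : (n:ℝ) ≠ 0)]
    ring
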